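/- (Esakia's Lemma for ◇) Let F = (W, R, 𝕎) be a descriptive general frame, with topology T(F) generated by taking 𝕎 as a base of clopen sets. Then for any downward directed family {C_i : i ∈ I} of nonempty closed sets, ◇(⋂_{i∈I} C_i) = ⋂_{i∈I} ◇C_i, where ◇A = {w : ∃v (Rwv ∧ v ∈ A)}. -/

import Mathlib

/-- The diamond set operator: `◇A = {w : ∃v, R w v ∧ v ∈ A}`. -/
def diaOp {W : Type} (R : W → W → Prop) (A : Set W) : Set W := {w | ∃ v, R w v ∧ v ∈ A}

/-- The box set operator: `□A = {w : ∀v, R w v → v ∈ A}`. -/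
def boxOp {W : Type} (R : W → W → Prop) (A : Set W) : Set W := {w | ∀ v, R w v → v ∈ A}

/-- The inverse diamond set operator: `◇⁻¹A = {w : ∃v ∈ A, R v w} = R(A)`. -/
def idiaOp {W : Type} (R : W → W → Prop) (A : Set W) : Set W := {w | ∃ v, R v w ∧ v ∈ A}

/-- The inverse box set operator: `□⁻¹A = {w : ∀v, R v w → v ∈ A}`. -/
def iboxOp {W : Type} (R : W → W → Prop) (A : Set W) : Set W := {w | ∀ v, R v w → v ∈ A}
/-- A general frame: a Kripke frame together with a Boolean algebra of
admissible subsets closed under the diamond operator. -/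
structure GenFrame (W : Type) where
  R : W → W → Prop
  adm : Set (Set W)
  univ_mem : Set.univ ∈ adm
  compl_mem : ∀ X ∈ adm, Xᶜ ∈ adm
  inter_mem : ∀ X ∈ adm, ∀ Y ∈ adm, X ∩ Y ∈ adm
  dia_mem : ∀ X ∈ adm, diaOp R X ∈ adm

/-- The topology generated by the admissible sets as a base of clopen sets. -/
def GenFrame.top {W : Type} (F : GenFrame W) : TopologicalSpace W :=
  TopologicalSpace.generateFrom F.adm

/-- Differentiated: distinct points are separated by admissible sets. -/
def GenFrame.differentiated {W : Type} (F : GenFrame W) : Prop :=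
  ∀ x y : W, x ≠ y → ∃ X ∈ F.adm, x ∈ X ∧ y ∉ X

/-- Tight: `R x y` iff `x ∈ ◇Y` for every admissible `Y` containing `y`. -/
def GenFrame.tight {W : Type} (F : GenFrame W) : Prop :=
  ∀ x y : W, F.R x y ↔ ∀ Y ∈ F.adm, y ∈ Y → x ∈ diaOp F.R Y

/-- Compact: every family of admissible sets with the finite intersection
property has nonempty intersection. -/
def GenFrame.cpt {W : Type} (F : GenFrame W) : Prop :=
  ∀ C : Set (Set W), C ⊆ F.adm →
    (∀ D : Set (Set W), D ⊆ C → D.Finite → (⋂₀ D).Nonempty) →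
    (⋂₀ C).Nonempty

/-- A descriptive frame is a differentiated, tight and compact general frame. -/
def GenFrame.descriptive {W : Type} (F : GenFrame W) : Prop :=
  F.differentiated ∧ F.tight ∧ F.cpt


lemma genframe_basis {W : Type} (F : GenFrame W) :
    @TopologicalSpace.IsTopologicalBasis W F.top F.adm := by
  letI := F.top
  refine ⟨?_, ?_, rfl⟩
  · intro t₁ h₁ t₂ h₂ x hx
    exact ⟨t₁ ∩ t₂, F.inter_mem _ h₁ _ h₂, hx, subset_rfl⟩
  · apply Set.eq_univ_of_univ_subset
    intro x _
    exact ⟨Set.univ, F.univ_mem, trivial⟩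

/-- A point in every admissible superset of a closed set lies in the set. -/
lemma mem_of_closed {W : Type} (F : GenFrame W) {S : Set W}
    (hS : @IsClosed W F.top S) {v : W}
    (hv : ∀ Z ∈ F.adm, S ⊆ Z → v ∈ Z) : v ∈ S := by
  letI := F.top
  by_contra hvS
  obtain ⟨Y, hY, hvY, hYsub⟩ :=
    (genframe_basis F).exists_subset_of_mem_open (by exact hvS : v ∈ Sᶜ)
      hS.isOpen_compl
  have : v ∈ Yᶜ := hv Yᶜ (F.compl_mem Y hY) (fun w hw hwY => hYsub hwY hw)
  exact this hvY

lemma dir_finite {W : Type} {I : Type} [Nonempty I] (C : I → Set W)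
    (hdir : ∀ i j, ∃ k, C k ⊆ C i ∩ C j) :
    ∀ s : Set I, s.Finite → ∃ k, ∀ i ∈ s, C k ⊆ C i := by
  intro s hs
  refine Set.Finite.induction_on (motive := fun s _ => ∃ k, ∀ i ∈ s, C k ⊆ C i) s hs ⟨Classical.arbitrary I, by simp⟩ ?_
  rintro a t _ _ ⟨k, hk⟩
  obtain ⟨m, hm⟩ := hdir a k
  refine ⟨m, ?_⟩
  intro i hi
  rcases Set.mem_insert_iff.mp hi with h | h
  · exact h ▸ (hm.trans Set.inter_subset_left)
  · exact (hm.trans Set.inter_subset_right).trans (hk i h)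

/-- Esakia's Lemma for `◇`: in a descriptive frame, `◇` commutes with
intersections of downward directed families of nonempty closed sets. -/
theorem esakia_dia {W : Type} (F : GenFrame W) (hF : F.descriptive)
    {I : Type} [Nonempty I] (C : I → Set W)
    (hclosed : ∀ i, @IsClosed W F.top (C i))
    (hne : ∀ i, (C i).Nonempty)
    (hdir : ∀ i j, ∃ k, C k ⊆ C i ∩ C j) :
    diaOp F.R (⋂ i, C i) = ⋂ i, diaOp F.R (C i) := by
  obtain ⟨_, htight, hcpt⟩ := hF
  apply subset_antisymm
  · intro w hw
    simp only [Set.mem_iInter]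
    intro i
    obtain ⟨v, hRv, hv⟩ := hw
    exact ⟨v, hRv, Set.mem_iInter.mp hv i⟩
  · intro x hx
    have hx' : ∀ i, ∃ v, F.R x v ∧ v ∈ C i := fun i => Set.mem_iInter.mp hx i
    set Rx : Set W := {y | F.R x y} with hRx
    set 𝒞 : Set (Set W) := {Z | Z ∈ F.adm ∧ ∃ i, Rx ∩ C i ⊆ Z} with h𝒞
    have hsub : 𝒞 ⊆ F.adm := fun Z hZ => hZ.1
    have hFIP : ∀ D : Set (Set W), D ⊆ 𝒞 → D.Finite → (⋂₀ D).Nonempty := by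
      intro D hD hDfin
      classical
      have hchoice : ∀ Z ∈ D, ∃ i, Rx ∩ C i ⊆ Z := fun Z hZ => (hD hZ).2
      let f : Set W → I := fun Z =>
        if h : ∃ i, Rx ∩ C i ⊆ Z then h.choose else Classical.arbitrary I
      have hf : ∀ Z ∈ D, Rx ∩ C (f Z) ⊆ Z := by
        intro Z hZ
        have h := hchoice Z hZ
        simp only [f, dif_pos h]
        exact h.choose_spec
      obtain ⟨k, hk⟩ := dir_finite C hdir (f '' D) (hDfin.image f)
      obtain ⟨v, hRv, hv⟩ := hx' k
      refine ⟨v, ?_⟩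
      intro Z hZ
      exact hf Z hZ ⟨hRv, hk (f Z) ⟨Z, hZ, rfl⟩ hv⟩
    obtain ⟨v, hv⟩ := hcpt 𝒞 hsub hFIP
    have hvmem : ∀ Z ∈ 𝒞, v ∈ Z := fun Z hZ => hv Z hZ
    have hRxv : F.R x v := by
      rw [htight]
      intro Y hY hvY
      by_contra hxY
      have hYc : Yᶜ ∈ 𝒞 := by
        refine ⟨F.compl_mem Y hY, Classical.arbitrary I, ?_⟩
        rintro w ⟨hw, -⟩ hwY
        exact hxY ⟨w, hw, hwY⟩
      exact hvmem Yᶜ hYc hvY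
    refine ⟨v, hRxv, Set.mem_iInter.mpr fun i => ?_⟩
    apply mem_of_closed F (hclosed i)
    intro Z hZ hCZ
    exact hvmem Z ⟨hZ, i, (Set.inter_subset_right).trans hCZ⟩
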